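/- Let D > 0, 0 < γ < D+1, c > 0 and C₀ > 0 be real numbers, and let s ∈ (0,1) satisfy s·(D+1) < D. There exists a constant C₁ > 0, depending only on D, γ, c, C₀ and s, with the following property. Let ρ > 0 and let G : (0,∞) → ℝ be a measurable function satisfying 0 ≤ G(λ) ≤ C₀ · (1+λ)^(−1/(D+1)) · exp(−c · ρ^γ · λ^(γ/(D+1))) for all λ > 0. Then ∫_0^∞ λ^(−s) · G(λ) dλ ≤ C₁ · ρ^(s(D+1)−D). -/

import Mathlib

open MeasureTheory Real

lemma aux_integrableOn_rpow_mul_exp_neg_mul_rpow {a b q : ℝ} (ha : -1 < a) (hb : 0 < b)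
    (hq : 0 < q) :
    IntegrableOn (fun x : ℝ => x ^ a * Real.exp (-b * x ^ q)) (Set.Ioi 0) := by
  have hq' : (1 / q : ℝ) ≠ 0 := one_div_ne_zero hq.ne'
  rw [← MeasureTheory.integrableOn_Ioi_comp_rpow_iff'
    (fun x : ℝ => x ^ a * Real.exp (-b * x ^ q)) hq']
  have hexp : (-1 : ℝ) < (1 + a) / q - 1 := by
    have : 0 < (1 + a) / q := div_pos (by linarith) hq
    linarith
  have hbase : IntegrableOn (fun x : ℝ => x ^ ((1 + a) / q - 1) * Real.exp (-b * x))
      (Set.Ioi 0) := by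
    have := integrableOn_rpow_mul_exp_neg_mul_rpow (p := 1) hexp one_pos hb
    simpa [Real.rpow_one] using this
  refine hbase.congr_fun (fun x hx => ?_) measurableSet_Ioi
  have hx0 : (0 : ℝ) < x := hx
  have h1 : (x ^ (1 / q)) ^ a = x ^ (a / q) := by
    rw [← Real.rpow_mul hx0.le]
    congr 1
    ring
  have h2 : (x ^ (1 / q)) ^ q = x := by
    rw [← Real.rpow_mul hx0.le, one_div_mul_cancel hq.ne', Real.rpow_one]
  have h3 : x ^ ((1 + a) / q - 1) = x ^ (1 / q - 1) * x ^ (a / q) := by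
    rw [← Real.rpow_add hx0]
    congr 1
    field_simp
    ring
  simp only [smul_eq_mul, h1, h2, h3]
  ring

/-- Proposition 2.2: bound for the Riesz kernel `K_s(x,y) = ∫_0^∞ λ^(-s) G_λ(x,y) dλ`. -/
theorem riesz_kernel_bound (D γ c C₀ s : ℝ) (hD : 0 < D) (hγ0 : 0 < γ) (hγ : γ < D + 1)
    (hc : 0 < c) (hC₀ : 0 < C₀) (hs0 : 0 < s) (hs1 : s < 1) (hsD : s * (D + 1) < D) :
    ∃ C₁ : ℝ, 0 < C₁ ∧
      ∀ ρ : ℝ, 0 < ρ →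
      ∀ G : ℝ → ℝ, Measurable G →
        (∀ lam : ℝ, 0 < lam → 0 ≤ G lam ∧
          G lam ≤ C₀ * (1 + lam) ^ (-(1 / (D + 1))) *
            Real.exp (-c * ρ ^ γ * lam ^ (γ / (D + 1)))) →
        ∫ lam in Set.Ioi (0 : ℝ), lam ^ (-s) * G lam ≤ C₁ * ρ ^ (s * (D + 1) - D) := by
  have hD1 : (0 : ℝ) < D + 1 := by linarith
  set q : ℝ := γ / (D + 1) with hq_def
  have hq : 0 < q := div_pos hγ0 hD1
  set p : ℝ := s + 1 / (D + 1) with hp_def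
  have hp1 : p < 1 := by
    rw [hp_def]
    rw [← lt_div_iff₀ hD1] at hsD
    have : (1 : ℝ) / (D + 1) + D / (D + 1) = 1 := by field_simp; ring
    linarith
  have hp0 : 0 < p := by
    have : 0 < 1 / (D + 1) := by positivity
    rw [hp_def]; linarith
  have hnegp : (-1 : ℝ) < -p := by linarith
  set f : ℝ → ℝ := fun u => u ^ (-p) * Real.exp (-c * u ^ q) with hf_def
  have hI_int : IntegrableOn f (Set.Ioi 0) :=
    aux_integrableOn_rpow_mul_exp_neg_mul_rpow hnegp hc hq
  set I : ℝ := ∫ u in Set.Ioi (0 : ℝ), f u with hI_def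
  have hI_pos : 0 < I := by
    have hae : 0 ≤ᶠ[ae (volume.restrict (Set.Ioi (0:ℝ)))] f := by
      refine (ae_restrict_iff' measurableSet_Ioi).mpr (Filter.Eventually.of_forall ?_)
      intro x hx
      have hx0 : (0 : ℝ) < x := hx
      rw [hf_def]
      positivity
    rw [hI_def]
    rw [setIntegral_pos_iff_support_of_nonneg_ae hae hI_int]
    have hsub : Set.Ioi (0 : ℝ) ⊆ Function.support f ∩ Set.Ioi 0 := by
        intro x hx
        refine ⟨?_, hx⟩
        have hx0 : (0 : ℝ) < x := hx
        have : 0 < f x := by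
          rw [hf_def]
          positivity
        exact this.ne'
    calc (0 : ENNReal) < volume (Set.Ioi (0 : ℝ)) := by simp
      _ ≤ volume (Function.support f ∩ Set.Ioi 0) := measure_mono hsub
  refine ⟨C₀ * I, by positivity, ?_⟩
  intro ρ hρ G hG hbound
  set b : ℝ := ρ ^ (D + 1) with hb_def
  have hb : 0 < b := Real.rpow_pos_of_pos hρ _
  -- pointwise bound
  have hpt : ∀ x ∈ Set.Ioi (0 : ℝ), x ^ (-s) * G x ≤ C₀ * b ^ p * f (b * x) := by
    intro x hx
    have hx0 : (0 : ℝ) < x := hx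
    have h1 : x ^ (-s) * G x ≤ x ^ (-s) *
        (C₀ * (1 + x) ^ (-(1 / (D + 1))) * Real.exp (-c * ρ ^ γ * x ^ q)) := by
      have := (hbound x hx0).2
      have hnn : (0 : ℝ) ≤ x ^ (-s) := Real.rpow_nonneg hx0.le _
      exact mul_le_mul_of_nonneg_left this hnn
    have h2 : (1 + x) ^ (-(1 / (D + 1))) ≤ x ^ (-(1 / (D + 1))) :=
      Real.rpow_le_rpow_of_nonpos hx0 (by linarith) (neg_nonpos.mpr (by positivity))
    have h3 : x ^ (-s) * (C₀ * (1 + x) ^ (-(1 / (D + 1))) * Real.exp (-c * ρ ^ γ * x ^ q)) ≤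
        x ^ (-s) * (C₀ * x ^ (-(1 / (D + 1))) * Real.exp (-c * ρ ^ γ * x ^ q)) := by
      have hnn : (0 : ℝ) ≤ x ^ (-s) := Real.rpow_nonneg hx0.le _
      have hexp : (0 : ℝ) ≤ Real.exp (-c * ρ ^ γ * x ^ q) := (Real.exp_pos _).le
      exact mul_le_mul_of_nonneg_left
        (mul_le_mul_of_nonneg_right (mul_le_mul_of_nonneg_left h2 hC₀.le) hexp) hnn
    have h4 : x ^ (-s) * (C₀ * x ^ (-(1 / (D + 1))) * Real.exp (-c * ρ ^ γ * x ^ q)) =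
        C₀ * b ^ p * f (b * x) := by
      simp only [hf_def]
      have hbxq : (b * x) ^ q = ρ ^ γ * x ^ q := by
        rw [Real.mul_rpow hb.le hx0.le, hb_def, ← Real.rpow_mul hρ.le]
        congr 2
        rw [hq_def]
        field_simp
      have hbxp : (b * x) ^ (-p) = b ^ (-p) * x ^ (-p) :=
        Real.mul_rpow hb.le hx0.le
      have hxp : x ^ (-s) * x ^ (-(1 / (D + 1))) = x ^ (-p) := by
        rw [← Real.rpow_add hx0]
        congr 1
        rw [hp_def]; ring
      have hbp : b ^ p * b ^ (-p) = 1 := by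
        rw [← Real.rpow_add hb]; simp
      rw [hbxq, hbxp]
      calc x ^ (-s) * (C₀ * x ^ (-(1 / (D + 1))) * Real.exp (-c * ρ ^ γ * x ^ q))
          = C₀ * (x ^ (-s) * x ^ (-(1 / (D + 1)))) * Real.exp (-c * ρ ^ γ * x ^ q) := by ring
        _ = C₀ * x ^ (-p) * Real.exp (-c * ρ ^ γ * x ^ q) := by rw [hxp]
        _ = C₀ * b ^ p * (b ^ (-p) * x ^ (-p) * Real.exp (-c * (ρ ^ γ * x ^ q))) := by
            rw [show -c * ρ ^ γ * x ^ q = -c * (ρ ^ γ * x ^ q) by ring]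
            linear_combination (-(C₀ * x ^ (-p) * Real.exp (-c * (ρ ^ γ * x ^ q)))) * hbp
    linarith
  -- integrability of the comparison function
  have hcomp : IntegrableOn (fun x : ℝ => C₀ * b ^ p * f (b * x)) (Set.Ioi 0) := by
    have : IntegrableOn (fun x : ℝ => f (b * x)) (Set.Ioi 0) := by
      have h0 : IntegrableOn f (Set.Ioi (b * 0)) := by simpa using hI_int
      exact (integrableOn_Ioi_comp_mul_left_iff f (0 : ℝ) hb).mpr h0
    exact this.const_mul _
  -- monotonicity
  have hmono : ∫ x in Set.Ioi (0 : ℝ), x ^ (-s) * G x ≤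
      ∫ x in Set.Ioi (0 : ℝ), C₀ * b ^ p * f (b * x) := by
    refine integral_mono_of_nonneg ?_ hcomp ?_
    · refine (ae_restrict_iff' measurableSet_Ioi).mpr (Filter.Eventually.of_forall ?_)
      intro x hx
      have hx0 : (0 : ℝ) < x := hx
      exact mul_nonneg (Real.rpow_nonneg hx0.le _) (hbound x hx0).1
    · exact (ae_restrict_iff' measurableSet_Ioi).mpr (Filter.Eventually.of_forall hpt)
  -- change of variables
  have hsubst : ∫ x in Set.Ioi (0 : ℝ), f (b * x) = b⁻¹ * I := by
    have := integral_comp_mul_left_Ioi f 0 hb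
    simpa [mul_zero, smul_eq_mul, hI_def] using this
  have hfinal : ∫ x in Set.Ioi (0 : ℝ), C₀ * b ^ p * f (b * x) =
      C₀ * I * ρ ^ (s * (D + 1) - D) := by
    rw [integral_const_mul, hsubst]
    have hbent : b ^ p * b⁻¹ = ρ ^ (s * (D + 1) - D) := by
      rw [hb_def, ← Real.rpow_neg_one (ρ ^ (D + 1)), ← Real.rpow_mul hρ.le,
        ← Real.rpow_mul hρ.le, ← Real.rpow_add hρ]
      congr 1
      rw [hp_def]
      field_simp
      ring
    calc C₀ * b ^ p * (b⁻¹ * I) = C₀ * I * (b ^ p * b⁻¹) := by ring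
      _ = C₀ * I * ρ ^ (s * (D + 1) - D) := by rw [hbent]
  linarith [hmono, hfinal.le, hfinal.ge]
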